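/- If the Y-conditional density factors as f_i(x,y) ∝ w_i(x,y) g_X(x) g_Y(y) for each sample i (the null of independence under biased sampling), then the conditional permutation probability P(π | d_n) = ∏_{i=1}^K [∏_j f_i(x_{ij}, y_{i,π_i(j)})] / [Σ_{π'_i} ∏_{j'} f_i(x_{ij'}, y_{i,π'_i(j')})] equals ∏_{i=1}^K (1/per(W_i)) ∏_{j=1}^{n_i} W_i(j, π_i(j)), where W_i(j,j') := w_i(x_{ij}, y_{ij'}) and per(W_i) := Σ_{π'_i ∈ S_{n_i}} ∏_{j'} W_i(j', π'_i(j')) is the permanent; in particular, it does not depend on g_X or g_Y. -/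
import Mathlib

/-- Under the null of independence with biased sampling, where
`f i (x,y) = c i · w i (x,y) · g_X(x) · g_Y(y)` (`c i > 0` normalizing constants,
`g_X, g_Y` positive at the data points), the conditional permutation probability
`∏ᵢ (∏ⱼ fᵢ(xᵢⱼ, y_{i,πᵢ(j)})) / (∑_{π'ᵢ} ∏ⱼ fᵢ(xᵢⱼ, y_{i,π'ᵢ(j)}))` equals
`∏ᵢ (∏ⱼ Wᵢ(j, πᵢ(j))) / per(Wᵢ)`, with `Wᵢ(j,j') = wᵢ(xᵢⱼ, yᵢⱼ')` and
`per(Wᵢ) = ∑_{π'ᵢ} ∏ⱼ Wᵢ(j', π'ᵢ(j'))` the permanent; in particular it does not depend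
on `g_X` or `g_Y`. -/
theorem stmt_13 {α β : Type*} (K : ℕ) (n : Fin K → ℕ)
    (w : Fin K → α → β → ℝ) (gX : α → ℝ) (gY : β → ℝ) (c : Fin K → ℝ)
    (f : Fin K → α → β → ℝ)
    (hf : ∀ i a b, f i a b = c i * (w i a b * (gX a * gY b)))
    (x : (i : Fin K) → Fin (n i) → α) (y : (i : Fin K) → Fin (n i) → β)
    (hc : ∀ i, 0 < c i)
    (hgX : ∀ i j, 0 < gX (x i j)) (hgY : ∀ i j, 0 < gY (y i j))
    (π : (i : Fin K) → Equiv.Perm (Fin (n i))) :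
    (∏ i, (∏ j, f i (x i j) (y i (π i j))) /
        (∑ π' : Equiv.Perm (Fin (n i)), ∏ j, f i (x i j) (y i (π' j)))) =
      ∏ i, (∏ j, w i (x i j) (y i (π i j))) /
        (∑ π' : Equiv.Perm (Fin (n i)), ∏ j, w i (x i j) (y i (π' j))) := by
  refine Finset.prod_congr rfl fun i _ => ?_
  set C : ℝ := c i ^ (n i) * (∏ j, gX (x i j)) * ∏ j, gY (y i j) with hC
  have key : ∀ σ : Equiv.Perm (Fin (n i)),
      (∏ j, f i (x i j) (y i (σ j))) = C * ∏ j, w i (x i j) (y i (σ j)) := by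
    intro σ
    have h1 : (∏ j, gY (y i (σ j))) = ∏ j, gY (y i j) :=
      Equiv.prod_comp σ fun j => gY (y i j)
    simp only [hf, Finset.prod_mul_distrib, Finset.prod_const, Finset.card_univ,
      Fintype.card_fin, h1, hC]
    ring
  have hCne : C ≠ 0 := by
    have := hc i
    have h2 : (0:ℝ) < ∏ j, gX (x i j) := Finset.prod_pos fun j _ => hgX i j
    have h3 : (0:ℝ) < ∏ j, gY (y i j) := Finset.prod_pos fun j _ => hgY i j
    positivity
  rw [key (π i), show (∑ π' : Equiv.Perm (Fin (n i)), ∏ j, f i (x i j) (y i (π' j)))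
      = C * ∑ π' : Equiv.Perm (Fin (n i)), ∏ j, w i (x i j) (y i (π' j)) by
    rw [Finset.mul_sum]; exact Finset.sum_congr rfl fun σ _ => key σ,
    mul_div_mul_left _ _ hCne]
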